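/- Let n ≥ 1, let j₁, …, j_n ∈ {−m, …, m} and let k, ℓ ∈ {−m, …, m} with |k − ℓ| = 1. Then G_{j₁⋯j_n k} ∩ G_{j₁⋯j_n ℓ} is a single point if and only if |ε| = p^{n+1}. -/

import Mathlib

noncomputable section

/-- `b_j = ε` if `j` is odd and `b_j = 0` if `j` is even. -/
def bshift (ε : ℝ) (j : ℤ) : ℝ := if Odd j then ε else 0

/-- The self-similar set `T_ε` associated with `p = 2m+1` and the shift `ε`. -/
def Tset (p : ℤ) (m : ℕ) (ε : ℝ) : Set (ℝ × ℝ) :=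
  { z | ∃ i j : ℕ → ℤ, (∀ k, |i k| ≤ (m : ℤ)) ∧ (∀ k, |j k| ≤ (m : ℤ)) ∧
      z.1 = ∑' k : ℕ, ((p : ℝ) ^ (k + 1))⁻¹ * ((i k : ℝ) + bshift ε (j k)) ∧
      z.2 = ∑' k : ℕ, ((p : ℝ) ^ (k + 1))⁻¹ * (j k : ℝ) }

/-- The map `f_{i,j}(x, y) = ((x + i + b_j)/p, (y + j)/p)`. -/
def fmap (p : ℤ) (ε : ℝ) (i j : ℤ) (z : ℝ × ℝ) : ℝ × ℝ :=
  ((z.1 + (i : ℝ) + bshift ε j) / (p : ℝ), (z.2 + (j : ℝ)) / (p : ℝ))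

/-- For a word `j₁ ⋯ j_n` (a list of integers in `{-m, …, m}`),
`G_{j₁⋯j_n} = ⋃_{i₁,…,i_n ∈ {-m,…,m}} f_{i₁,j₁} ∘ ⋯ ∘ f_{i_n,j_n}(T_ε)`. -/
def Gset (p : ℤ) (m : ℕ) (ε : ℝ) : List ℤ → Set (ℝ × ℝ)
  | [] => Tset p m ε
  | j :: w => ⋃ i ∈ Finset.Icc (-(m : ℤ)) (m : ℤ), fmap p ε i j '' Gset p m ε w

namespace S6


variable {P : ℝ}

lemma summable_pow (hP : 1 < P) : Summable (fun t : ℕ => (P ^ (t+1))⁻¹) := by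
  have h : Summable (fun t : ℕ => (P⁻¹) ^ t) :=
    summable_geometric_of_lt_one (by positivity) (by
      rw [inv_lt_one_iff₀]; right; exact hP)
  have := h.mul_left P⁻¹
  refine this.congr ?_
  intro t
  rw [pow_succ]
  rw [mul_inv, inv_pow]
  ring

lemma summable_bdd (hP : 1 < P) (a : ℕ → ℝ) (C : ℝ) (ha : ∀ t, |a t| ≤ C) :
    Summable (fun t : ℕ => (P ^ (t+1))⁻¹ * a t) := by
  have h0 : (0:ℝ) < P := lt_trans one_pos hP
  refine Summable.of_norm_bounded ((summable_pow hP).mul_right C) ?_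
  intro t
  rw [Real.norm_eq_abs, abs_mul, abs_of_pos (by positivity)]
  exact mul_le_mul_of_nonneg_left (ha t) (by positivity)

lemma tsum_pow (hP : 1 < P) : ∑' t : ℕ, (P ^ (t+1))⁻¹ = (P - 1)⁻¹ := by
  have h0 : (0:ℝ) < P := lt_trans one_pos hP
  have hr : P⁻¹ < 1 := by rw [inv_lt_one_iff₀]; right; exact hP
  have h : ∑' t : ℕ, (P⁻¹) ^ t = (1 - P⁻¹)⁻¹ := tsum_geometric_of_lt_one (by positivity) hr
  have h2 : ∑' t : ℕ, (P ^ (t+1))⁻¹ = P⁻¹ * ∑' t : ℕ, (P⁻¹) ^ t := by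
    rw [← tsum_mul_left]
    congr 1; funext t; rw [pow_succ]; rw [mul_inv, inv_pow]; ring
  rw [h2, h]
  field_simp

/-- bound: |∑' (P^(t+1))⁻¹ a t| ≤ C/(P-1) when |a t| ≤ C. -/
lemma tsum_abs_le (hP : 1 < P) (a : ℕ → ℝ) (C : ℝ) (ha : ∀ t, |a t| ≤ C) :
    |∑' t : ℕ, (P ^ (t+1))⁻¹ * a t| ≤ C * (P - 1)⁻¹ := by
  have h0 : (0:ℝ) < P := lt_trans one_pos hP
  calc |∑' t : ℕ, (P ^ (t+1))⁻¹ * a t|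
      ≤ ∑' t : ℕ, |(P ^ (t+1))⁻¹ * a t| := by
        have h1 : ‖∑' t : ℕ, (P ^ (t+1))⁻¹ * a t‖ ≤ ∑' t : ℕ, ‖(P ^ (t+1))⁻¹ * a t‖ :=
          norm_tsum_le_tsum_norm (by
            simp only [Real.norm_eq_abs]
            exact (summable_bdd hP a C ha).abs)
        simp only [Real.norm_eq_abs] at h1
        exact h1
    _ ≤ ∑' t : ℕ, (P ^ (t+1))⁻¹ * C := by
        refine Summable.tsum_le_tsum ?_ (summable_bdd hP a C ha).abs ((summable_pow hP).mul_right C)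
        intro t
        rw [abs_mul, abs_of_pos (show (0:ℝ) < (P ^ (t+1))⁻¹ by positivity)]
        exact mul_le_mul_of_nonneg_left (ha t) (by positivity)
    _ = C * (P - 1)⁻¹ := by rw [tsum_mul_right, tsum_pow hP]; ring

/-- equality case: if the sum attains the max, every digit is maximal. -/
lemma tsum_eq_max (hP : 1 < P) (a : ℕ → ℝ) (C : ℝ) (ha : ∀ t, |a t| ≤ C)
    (h : ∑' t : ℕ, (P ^ (t+1))⁻¹ * a t = C * (P - 1)⁻¹) : ∀ t, a t = C := by
  have h0 : (0:ℝ) < P := lt_trans one_pos hP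
  have hg : Summable (fun t : ℕ => (P ^ (t+1))⁻¹ * (C - a t)) :=
    (((summable_pow hP).mul_right C).sub (summable_bdd hP a C ha)).congr (by intro t; ring)
  have hzero : ∑' t : ℕ, (P ^ (t+1))⁻¹ * (C - a t) = 0 := by
    have := Summable.tsum_sub ((summable_pow hP).mul_right C) (summable_bdd hP a C ha)
    have h2 : ∑' t : ℕ, ((P ^ (t+1))⁻¹ * C - (P ^ (t+1))⁻¹ * a t)
        = ∑' t : ℕ, (P ^ (t+1))⁻¹ * (C - a t) := by
      congr 1; funext t; ring
    rw [h2] at this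
    rw [this, tsum_mul_right, tsum_pow hP, h]
    ring
  have hnn : ∀ t : ℕ, 0 ≤ (P ^ (t+1))⁻¹ * (C - a t) := by
    intro t
    have : a t ≤ C := le_trans (le_abs_self _) (ha t)
    have hpow : (0:ℝ) ≤ (P ^ (t+1))⁻¹ := by positivity
    exact mul_nonneg hpow (by linarith)
  intro t
  have hle : (P ^ (t+1))⁻¹ * (C - a t) ≤ 0 := by
    rw [← hzero]
    exact Summable.le_tsum hg t (fun j _ => hnn j)
  have := le_antisymm hle (hnn t)
  have hpow : (0:ℝ) < (P ^ (t+1))⁻¹ := by positivity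
  nlinarith [this]


/-- The real base `2m+1`. -/
def Pr (m : ℕ) : ℝ := 2 * m + 1

lemma Pr_pos (m : ℕ) : 0 < Pr m := by unfold Pr; positivity

lemma Pr_gt_one (m : ℕ) (hm : 1 ≤ m) : 1 < Pr m := by
  unfold Pr
  have : (1:ℝ) ≤ (m:ℝ) := by exact_mod_cast hm
  nlinarith

/-- clamp the rounding to `[-m, m]`. -/
def clampd (m : ℕ) (y : ℝ) : ℤ := max (-(m:ℤ)) (min (m:ℤ) (round y))

lemma clampd_abs_le (m : ℕ) (y : ℝ) : |clampd m y| ≤ (m:ℤ) := by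
  rw [abs_le]; unfold clampd
  constructor
  · exact le_max_left _ _
  · exact max_le (by omega) (min_le_left _ _)

lemma clampd_close (m : ℕ) (y : ℝ) (hy : |y| ≤ Pr m / 2) :
    |y - clampd m y| ≤ 1/2 := by
  have hr := abs_sub_round y
  have hy1 := abs_le.1 hy
  unfold Pr at hy1
  rcases le_or_gt (round y) (-(m:ℤ)) with h1 | h1
  · have hcl : clampd m y = -(m:ℤ) := by
      unfold clampd
      rw [min_eq_right (by omega), max_eq_left (by omega)]
    rw [hcl]
    have h3 : (round y : ℝ) ≤ -(m:ℝ) := by exact_mod_cast h1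
    rw [abs_le] at hr ⊢
    push_cast
    constructor <;> nlinarith [hr.1, hr.2]
  rcases le_or_gt ((m:ℤ)) (round y) with h2 | h2
  · have hcl : clampd m y = (m:ℤ) := by
      unfold clampd
      rw [min_eq_left h2, max_eq_right (by omega)]
    rw [hcl]
    have h3 : (m:ℝ) ≤ (round y : ℝ) := by exact_mod_cast h2
    rw [abs_le] at hr ⊢
    push_cast
    constructor <;> nlinarith [hr.1, hr.2]
  · have hcl : clampd m y = round y := by
      unfold clampd
      rw [min_eq_right (le_of_lt h2), max_eq_right (by omega)]
    rw [hcl]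
    exact hr

/-- the remainder sequence of the greedy balanced base-(2m+1) expansion. -/
def dstate (m : ℕ) (x : ℝ) : ℕ → ℝ
  | 0 => x
  | t+1 => Pr m * dstate m x t - clampd m (Pr m * dstate m x t)

/-- the digit sequence. -/
def digs (m : ℕ) (x : ℝ) (t : ℕ) : ℤ := clampd m (Pr m * dstate m x t)

lemma digs_def (m : ℕ) (x : ℝ) (t : ℕ) :
    digs m x t = clampd m (Pr m * dstate m x t) := rfl

lemma digs_abs_le (m : ℕ) (x : ℝ) (t : ℕ) : |digs m x t| ≤ (m:ℤ) := by
  rw [digs_def]; exact clampd_abs_le _ _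

lemma dstate_abs_le (m : ℕ) (x : ℝ) (hx : |x| ≤ 1/2) :
    ∀ t, |dstate m x t| ≤ 1/2 := by
  intro t
  induction t with
  | zero => exact hx
  | succ t ih =>
    show |Pr m * dstate m x t - clampd m (Pr m * dstate m x t)| ≤ 1/2
    apply clampd_close
    rw [abs_mul, abs_of_pos (Pr_pos m)]
    nlinarith [ih, abs_nonneg (dstate m x t), Pr_pos m]

lemma dstate_partial (m : ℕ) (x : ℝ) :
    ∀ N, x = (∑ t ∈ Finset.range N, ((Pr m) ^ (t+1))⁻¹ * (digs m x t : ℝ))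
      + ((Pr m) ^ N)⁻¹ * dstate m x N := by
  have hP : (0:ℝ) < Pr m := Pr_pos m
  intro N
  induction N with
  | zero => simp [dstate]
  | succ N ih =>
    refine ih.trans ?_
    rw [Finset.sum_range_succ]
    have hd : dstate m x (N+1) = Pr m * dstate m x N - (digs m x N : ℝ) := rfl
    have hne : (Pr m) ^ N ≠ 0 := by positivity
    have hne2 : Pr m ≠ 0 := ne_of_gt hP
    rw [hd, pow_succ]
    field_simp
    ring

lemma exists_digits (m : ℕ) (hm : 1 ≤ m) (x : ℝ) (hx : |x| ≤ 1/2) :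
    ∃ a : ℕ → ℤ, (∀ t, |a t| ≤ (m:ℤ)) ∧
      ∑' t : ℕ, ((Pr m) ^ (t+1))⁻¹ * (a t : ℝ) = x := by
  have hP : (1:ℝ) < Pr m := Pr_gt_one m hm
  refine ⟨digs m x, digs_abs_le m x, ?_⟩
  have hsum : Summable (fun t : ℕ => ((Pr m) ^ (t+1))⁻¹ * (digs m x t : ℝ)) := by
    apply summable_bdd hP _ (m:ℝ)
    intro t
    exact_mod_cast digs_abs_le m x t
  have htend : Filter.Tendsto
      (fun N : ℕ => ∑ t ∈ Finset.range N, ((Pr m) ^ (t+1))⁻¹ * (digs m x t : ℝ))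
      Filter.atTop (nhds x) := by
    have key : ∀ N, (∑ t ∈ Finset.range N, ((Pr m) ^ (t+1))⁻¹ * (digs m x t : ℝ))
        = x - ((Pr m) ^ N)⁻¹ * dstate m x N := by
      intro N; have := dstate_partial m x N; linarith
    simp only [key]
    have h0 : Filter.Tendsto (fun N : ℕ => ((Pr m) ^ N)⁻¹ * dstate m x N)
        Filter.atTop (nhds 0) := by
      refine squeeze_zero_norm (a := fun N : ℕ => ((Pr m) ^ N)⁻¹ * (1/2)) ?_ ?_
      · intro N
        show |((Pr m) ^ N)⁻¹ * dstate m x N| ≤ _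
        rw [abs_mul]
        have h1 : |((Pr m) ^ N)⁻¹| = ((Pr m) ^ N)⁻¹ := by
          apply abs_of_pos
          have := Pr_pos m
          positivity
      
        rw [h1]
        exact mul_le_mul_of_nonneg_left (dstate_abs_le m x hx N)
          (by have := Pr_pos m; positivity)
      · have := tendsto_pow_atTop_nhds_zero_of_lt_one
          (show (0:ℝ) ≤ (Pr m)⁻¹ by have := Pr_pos m; positivity)
          (show (Pr m)⁻¹ < 1 by rw [inv_lt_one_iff₀]; right; exact hP)
        simpa [inv_pow] using this.mul_const (1/2 : ℝ)
    have := Filter.Tendsto.const_sub x h0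
    simpa using this
  exact (hsum.hasSum_iff_tendsto_nat.mpr htend).tsum_eq

/-- cons for real sequences. -/
def rcons (c : ℝ) (a : ℕ → ℝ) : ℕ → ℝ := fun t => match t with
  | 0 => c
  | t'+1 => a t'

variable {P : ℝ}

lemma summable_rcons (hP : 1 < P) (c : ℝ) (a : ℕ → ℝ)
    (hs : Summable (fun t : ℕ => (P ^ (t+1))⁻¹ * a t)) :
    Summable (fun t : ℕ => (P ^ (t+1))⁻¹ * rcons c a t) := by
  have h0 : (0:ℝ) < P := lt_trans one_pos hP
  rw [← summable_nat_add_iff 1]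
  have : (fun t : ℕ => (P ^ ((t+1)+1))⁻¹ * rcons c a (t+1))
      = fun t : ℕ => P⁻¹ * ((P ^ (t+1))⁻¹ * a t) := by
    funext t
    show (P ^ (t+2))⁻¹ * a t = _
    rw [show t+2 = (t+1)+1 from rfl, pow_succ, mul_inv]
    ring
  rw [this]
  exact hs.mul_left _

lemma tsum_rcons (hP : 1 < P) (c : ℝ) (a : ℕ → ℝ)
    (hs : Summable (fun t : ℕ => (P ^ (t+1))⁻¹ * a t)) :
    ∑' t : ℕ, (P ^ (t+1))⁻¹ * rcons c a t = (c + ∑' t : ℕ, (P ^ (t+1))⁻¹ * a t) / P := by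
  have h0 : (0:ℝ) < P := lt_trans one_pos hP
  have hne : P ≠ 0 := ne_of_gt h0
  rw [Summable.tsum_eq_zero_add (summable_rcons hP c a hs)]
  have h1 : (fun t : ℕ => (P ^ ((t+1)+1))⁻¹ * rcons c a (t+1))
      = fun t : ℕ => P⁻¹ * ((P ^ (t+1))⁻¹ * a t) := by
    funext t
    show (P ^ (t+2))⁻¹ * a t = _
    rw [show t+2 = (t+1)+1 from rfl, pow_succ, mul_inv]
    ring
  rw [h1, tsum_mul_left]
  show (P ^ (0+1))⁻¹ * c + _ = _
  rw [pow_one]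
  field_simp

/-- splitting a weighted tsum at index N. -/
lemma tsum_split (hP : 1 < P) (a : ℕ → ℝ) (N : ℕ)
    (hs : Summable (fun t : ℕ => (P ^ (t+1))⁻¹ * a t)) :
    ∑' t : ℕ, (P ^ (t+1))⁻¹ * a t
      = (∑ t ∈ Finset.range N, (P ^ (t+1))⁻¹ * a t)
        + (P ^ N)⁻¹ * ∑' t : ℕ, (P ^ (t+1))⁻¹ * a (t + N) := by
  have h0 : (0:ℝ) < P := lt_trans one_pos hP
  rw [← Summable.sum_add_tsum_nat_add N hs]
  congr 1
  have h1 : (fun t : ℕ => (P ^ ((t+N)+1))⁻¹ * a (t+N))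
      = fun t : ℕ => (P ^ N)⁻¹ * ((P ^ (t+1))⁻¹ * a (t+N)) := by
    funext t
    rw [show (t+N)+1 = (t+1)+N by ring, pow_add, mul_inv]
    ring
  rw [← tsum_mul_left, ← h1]

/-- tsum of a constant sequence. -/
lemma tsum_const (hP : 1 < P) (c : ℝ) :
    ∑' t : ℕ, (P ^ (t+1))⁻¹ * c = c * (P - 1)⁻¹ := by
  rw [tsum_mul_right, tsum_pow hP]
  ring

/-- integer sequence cons. -/
def icons (c : ℤ) (a : ℕ → ℤ) : ℕ → ℤ := fun t => match t with
  | 0 => c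
  | t'+1 => a t'

/-- the digit description of `Gset`. -/
def Digits (p : ℤ) (m : ℕ) (ε : ℝ) (w : List ℤ) : Set (ℝ × ℝ) :=
  { z | ∃ i j : ℕ → ℤ, (∀ t, |i t| ≤ (m : ℤ)) ∧ (∀ t, |j t| ≤ (m : ℤ)) ∧
      (∀ t, t < w.length → j t = w.getD t 0) ∧
      z.1 = ∑' t : ℕ, ((p : ℝ) ^ (t + 1))⁻¹ * ((i t : ℝ) + bshift ε (j t)) ∧
      z.2 = ∑' t : ℕ, ((p : ℝ) ^ (t + 1))⁻¹ * (j t : ℝ) }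

lemma bshift_abs_le (ε : ℝ) (j : ℤ) : |bshift ε j| ≤ |ε| := by
  unfold bshift; split
  · exact le_refl _
  · simp [abs_nonneg]

lemma summand_bdd (m : ℕ) (ε : ℝ) (I J : ℕ → ℤ) (hI : ∀ t, |I t| ≤ (m:ℤ)) :
    ∀ t, |(I t : ℝ) + bshift ε (J t)| ≤ (m:ℝ) + |ε| := by
  intro t
  have h1 : |(I t : ℝ)| ≤ (m:ℝ) := by exact_mod_cast hI t
  calc |(I t : ℝ) + bshift ε (J t)| ≤ |(I t : ℝ)| + |bshift ε (J t)| := abs_add_le _ _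
    _ ≤ (m:ℝ) + |ε| := add_le_add h1 (bshift_abs_le ε (J t))

lemma summable_ij (hP : 1 < (P:ℝ)) (m : ℕ) (ε : ℝ) (I J : ℕ → ℤ) (hI : ∀ t, |I t| ≤ (m:ℤ)) :
    Summable (fun t : ℕ => ((P:ℝ) ^ (t+1))⁻¹ * ((I t : ℝ) + bshift ε (J t))) :=
  summable_bdd hP _ _ (summand_bdd m ε I J hI)

lemma summable_j (hP : 1 < (P:ℝ)) (m : ℕ) (J : ℕ → ℤ) (hJ : ∀ t, |J t| ≤ (m:ℤ)) :
    Summable (fun t : ℕ => ((P:ℝ) ^ (t+1))⁻¹ * (J t : ℝ)) :=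
  summable_bdd hP _ (m:ℝ) (fun t => by exact_mod_cast hJ t)

lemma gset_eq (p : ℤ) (m : ℕ) (hm : 1 ≤ m) (hp : p = 2*(m:ℤ)+1) (ε : ℝ) :
    ∀ w : List ℤ, (∀ j ∈ w, |j| ≤ (m:ℤ)) → Gset p m ε w = Digits p m ε w := by
  have hP : 1 < (p:ℝ) := by
    rw [hp]; push_cast
    have : (1:ℝ) ≤ (m:ℝ) := by exact_mod_cast hm
    nlinarith
  intro w
  induction w with
  | nil =>
    intro _
    show Tset p m ε = Digits p m ε []
    ext z
    constructor
    · rintro ⟨I, J, h1, h2, h3, h4⟩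
      exact ⟨I, J, h1, h2, fun t ht => absurd ht (by simp), h3, h4⟩
    · rintro ⟨I, J, h1, h2, _, h3, h4⟩
      exact ⟨I, J, h1, h2, h3, h4⟩
  | cons j w ih =>
    intro hw
    have hjm : |j| ≤ (m:ℤ) := hw j List.mem_cons_self
    have hwm : ∀ x ∈ w, |x| ≤ (m:ℤ) := fun x hx => hw x (List.mem_cons_of_mem _ hx)
    ext z
    show z ∈ ⋃ i ∈ Finset.Icc (-(m:ℤ)) (m:ℤ), fmap p ε i j '' Gset p m ε w ↔ _
    rw [ih hwm]
    simp only [Set.mem_iUnion, Set.mem_image, Finset.mem_Icc]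
    constructor
    · rintro ⟨i, hi, z', ⟨I, J, h1, h2, h3, h4, h5⟩, rfl⟩
      refine ⟨icons i I, icons j J, ?_, ?_, ?_, ?_, ?_⟩
      · intro t; cases t with
        | zero => exact abs_le.2 hi
        | succ t' => exact h1 t'
      · intro t; cases t with
        | zero => exact hjm
        | succ t' => exact h2 t'
      · intro t ht; cases t with
        | zero => rfl
        | succ t' =>
          show J t' = _
          rw [List.getD_cons_succ]
          exact h3 t' (by simpa using ht)
      · show (z'.1 + (i:ℝ) + bshift ε j) / (p:ℝ) = _
        have hfun : (fun t : ℕ => ((p:ℝ) ^ (t+1))⁻¹ * ((icons i I t : ℝ) + bshift ε (icons j J t)))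
            = fun t : ℕ => ((p:ℝ) ^ (t+1))⁻¹ * rcons ((i:ℝ) + bshift ε j)
                (fun t' => (I t' : ℝ) + bshift ε (J t')) t := by
          funext t; cases t <;> rfl
        rw [hfun, tsum_rcons hP _ _ (summable_ij hP m ε I J h1), h4]
        ring
      · show (z'.2 + (j:ℝ)) / (p:ℝ) = _
        have hfun : (fun t : ℕ => ((p:ℝ) ^ (t+1))⁻¹ * (icons j J t : ℝ))
            = fun t : ℕ => ((p:ℝ) ^ (t+1))⁻¹ * rcons (j:ℝ) (fun t' => (J t' : ℝ)) t := by
          funext t; cases t <;> rfl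
        rw [hfun, tsum_rcons hP _ _ (summable_j hP m J h2), h5]
        ring
    · rintro ⟨I, J, h1, h2, h3, h4, h5⟩
      have hJ0 : J 0 = j := h3 0 (by simp)
      refine ⟨I 0, abs_le.1 (h1 0),
        (∑' t : ℕ, ((p:ℝ) ^ (t+1))⁻¹ * ((I (t+1) : ℝ) + bshift ε (J (t+1))),
         ∑' t : ℕ, ((p:ℝ) ^ (t+1))⁻¹ * (J (t+1) : ℝ)), ?_, ?_⟩
      · exact ⟨fun t => I (t+1), fun t => J (t+1), fun t => h1 _, fun t => h2 _,
          fun t ht => by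
            have := h3 (t+1) (by simpa using Nat.succ_lt_succ ht)
            rwa [List.getD_cons_succ] at this, rfl, rfl⟩
      · have e1 : (fun t : ℕ => ((p:ℝ) ^ (t+1))⁻¹ * ((I t : ℝ) + bshift ε (J t)))
            = fun t : ℕ => ((p:ℝ) ^ (t+1))⁻¹ * rcons ((I 0 : ℝ) + bshift ε (J 0))
                (fun t' => (I (t'+1) : ℝ) + bshift ε (J (t'+1))) t := by
          funext t; cases t <;> rfl
        have e2 : (fun t : ℕ => ((p:ℝ) ^ (t+1))⁻¹ * (J t : ℝ))
            = fun t : ℕ => ((p:ℝ) ^ (t+1))⁻¹ * rcons ((J 0 : ℝ))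
                (fun t' => (J (t'+1) : ℝ)) t := by
          funext t; cases t <;> rfl
        have hz1 : z.1 = _ := h4
        have hz2 : z.2 = _ := h5
        rw [e1] at hz1
        rw [e2] at hz2
        rw [tsum_rcons hP _ _ (summable_ij hP m ε (fun t => I (t+1)) (fun t => J (t+1)) (fun t => h1 _))] at hz1
        rw [tsum_rcons hP _ _ (summable_j hP m (fun t => J (t+1)) (fun t => h2 _))] at hz2
        show fmap p ε (I 0) j (_, _) = z
        unfold fmap
        rw [← hJ0]
        exact Prod.ext (by rw [hz1]; ring) (by rw [hz2]; ring)


lemma getD_append_last (w : List ℤ) (c : ℤ) : (w ++ [c]).getD w.length 0 = c := by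
  rw [List.getD_append_right w [c] 0 w.length (le_refl _)]
  simp

lemma getD_append_lt (w : List ℤ) (c : ℤ) (t : ℕ) (ht : t < w.length) :
    (w ++ [c]).getD t 0 = w.getD t 0 :=
  List.getD_append _ _ _ _ ht

lemma getD_abs_le (m : ℕ) (w : List ℤ) (hw : ∀ x ∈ w, |x| ≤ (m:ℤ)) (t : ℕ) :
    |w.getD t 0| ≤ (m:ℤ) := by
  rcases lt_or_ge t w.length with ht | ht
  · rw [List.getD_eq_getElem _ _ ht]
    exact hw _ (w.getElem_mem ht)
  · rw [List.getD_eq_default _ _ ht]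
    simp

/-- evaluating `∑' (P^(t+1))⁻¹ g (J t)` for a sequence with prefix `w ++ [c]`
and constant tail `e`. -/
lemma tsum_of_prefix_tail (hP : 1 < P) (g : ℤ → ℝ) (C : ℝ)
    (J : ℕ → ℤ) (w : List ℤ) (c e : ℤ)
    (hg : ∀ t : ℕ, |g (J t)| ≤ C)
    (hpre : ∀ t, t < w.length + 1 → J t = (w ++ [c]).getD t 0)
    (htail : ∀ t, J (t + (w.length + 1)) = e) :
    ∑' t : ℕ, (P ^ (t+1))⁻¹ * g (J t)
      = (∑ t ∈ Finset.range w.length, (P ^ (t+1))⁻¹ * g (w.getD t 0))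
        + (P ^ (w.length+1))⁻¹ * g c
        + g e * ((P ^ (w.length+1))⁻¹ * (P-1)⁻¹) := by
  have hs : Summable (fun t : ℕ => (P ^ (t+1))⁻¹ * g (J t)) :=
    summable_bdd hP _ C hg
  rw [tsum_split hP _ (w.length+1) hs]
  have hfin : ∑ t ∈ Finset.range (w.length+1), (P ^ (t+1))⁻¹ * g (J t)
      = (∑ t ∈ Finset.range w.length, (P ^ (t+1))⁻¹ * g (w.getD t 0))
        + (P ^ (w.length+1))⁻¹ * g c := by
    rw [Finset.sum_range_succ]
    congr 1
    · refine Finset.sum_congr rfl ?_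
      intro t ht
      rw [Finset.mem_range] at ht
      rw [hpre t (by omega), getD_append_lt w c t ht]
    · rw [hpre w.length (by omega), getD_append_last]
  have htl : ∑' t : ℕ, (P ^ (t+1))⁻¹ * g (J (t + (w.length+1))) = g e * (P-1)⁻¹ := by
    have : (fun t : ℕ => (P ^ (t+1))⁻¹ * g (J (t + (w.length+1))))
        = fun t : ℕ => (P ^ (t+1))⁻¹ * g e := by
      funext t; rw [htail t]
    rw [this, tsum_const hP]
  rw [hfin, htl]
  ring

/-- the forced-tail lemma: if the second coordinates agree, the tails of the
`j`-digit sequences are `-m` and `m`. -/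
lemma forced_tail (m : ℕ) (hm : 1 ≤ m) {P : ℝ} (hPm : P = 2*(m:ℝ)+1)
    (w : List ℤ) (k l : ℤ) (hkl : k = l + 1)
    (J J' : ℕ → ℤ) (hJ : ∀ t, |J t| ≤ (m:ℤ)) (hJ' : ∀ t, |J' t| ≤ (m:ℤ))
    (hpre : ∀ t, t < w.length + 1 → J t = (w ++ [k]).getD t 0)
    (hpre' : ∀ t, t < w.length + 1 → J' t = (w ++ [l]).getD t 0)
    (heq : ∑' t : ℕ, (P ^ (t+1))⁻¹ * (J t : ℝ) = ∑' t : ℕ, (P ^ (t+1))⁻¹ * (J' t : ℝ)) :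
    ∀ t, J (t + (w.length+1)) = -(m:ℤ) ∧ J' (t + (w.length+1)) = (m:ℤ) := by
  have hm1 : (1:ℝ) ≤ (m:ℝ) := by exact_mod_cast hm
  have hP : 1 < P := by rw [hPm]; nlinarith
  have hP0 : (0:ℝ) < P := lt_trans one_pos hP
  set N := w.length + 1 with hN
  have hsJ : Summable (fun t : ℕ => (P ^ (t+1))⁻¹ * (J t : ℝ)) :=
    summable_bdd hP _ (m:ℝ) (fun t => by exact_mod_cast hJ t)
  have hsJ' : Summable (fun t : ℕ => (P ^ (t+1))⁻¹ * (J' t : ℝ)) :=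
    summable_bdd hP _ (m:ℝ) (fun t => by exact_mod_cast hJ' t)
  have hsplit := tsum_split hP (fun t => (J t : ℝ)) N hsJ
  have hsplit' := tsum_split hP (fun t => (J' t : ℝ)) N hsJ'
  -- finite parts agree except the last term
  have hfin : ∑ t ∈ Finset.range N, (P ^ (t+1))⁻¹ * (J t : ℝ)
      = (∑ t ∈ Finset.range w.length, (P ^ (t+1))⁻¹ * ((w.getD t 0 : ℤ) : ℝ))
        + (P ^ N)⁻¹ * (k : ℝ) := by
    rw [hN, Finset.sum_range_succ]
    congr 1
    · refine Finset.sum_congr rfl ?_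
      intro t ht
      rw [Finset.mem_range] at ht
      rw [hpre t (by omega), getD_append_lt w k t ht]
    · rw [hpre w.length (by omega), getD_append_last]
  have hfin' : ∑ t ∈ Finset.range N, (P ^ (t+1))⁻¹ * (J' t : ℝ)
      = (∑ t ∈ Finset.range w.length, (P ^ (t+1))⁻¹ * ((w.getD t 0 : ℤ) : ℝ))
        + (P ^ N)⁻¹ * (l : ℝ) := by
    rw [hN, Finset.sum_range_succ]
    congr 1
    · refine Finset.sum_congr rfl ?_
      intro t ht
      rw [Finset.mem_range] at ht
      rw [hpre' t (by omega), getD_append_lt w l t ht]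
    · rw [hpre' w.length (by omega), getD_append_last]
  -- tail sums
  have hPNne : (P:ℝ) ^ N ≠ 0 := by positivity
  have htails : ∑' t : ℕ, (P ^ (t+1))⁻¹ * ((J' (t+N) : ℝ) - (J (t+N) : ℝ)) = 1 := by
    have hsub : Summable (fun t : ℕ => (P ^ (t+1))⁻¹ * ((J' (t+N) : ℝ) - (J (t+N) : ℝ))) := by
      refine ((summable_bdd hP (fun t => ((J' (t+N) : ℤ) : ℝ)) (m:ℝ)
          (fun t => by show |((J' (t+N) : ℤ) : ℝ)| ≤ (m:ℝ); exact_mod_cast hJ' (t+N))).sub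
        (summable_bdd hP (fun t => ((J (t+N) : ℤ) : ℝ)) (m:ℝ)
          (fun t => by show |((J (t+N) : ℤ) : ℝ)| ≤ (m:ℝ); exact_mod_cast hJ (t+N)))).congr ?_
      intro t; ring
    have h1 : ∑' t : ℕ, (P ^ (t+1))⁻¹ * ((J' (t+N) : ℝ) - (J (t+N) : ℝ))
        = (∑' t : ℕ, (P ^ (t+1))⁻¹ * (J' (t+N) : ℝ))
          - ∑' t : ℕ, (P ^ (t+1))⁻¹ * (J (t+N) : ℝ) := by
      rw [← Summable.tsum_sub (summable_bdd hP _ (m:ℝ) (fun t => by exact_mod_cast hJ' (t+N)))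
        (summable_bdd hP _ (m:ℝ) (fun t => by exact_mod_cast hJ (t+N)))]
      congr 1; funext t; ring
    rw [h1]
    -- from heq and the splittings
    have hk1 : (k:ℝ) = (l:ℝ) + 1 := by exact_mod_cast congrArg (Int.cast : ℤ → ℝ) hkl
    have h2 : (P ^ N)⁻¹ * (∑' t : ℕ, (P ^ (t+1))⁻¹ * (J' (t+N) : ℝ)
        - ∑' t : ℕ, (P ^ (t+1))⁻¹ * (J (t+N) : ℝ)) = (P ^ N)⁻¹ * 1 := by
      rw [mul_sub]
      rw [hsplit, hfin] at heq
      rw [hsplit', hfin'] at heq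
      rw [hk1] at heq
      rw [mul_one]
      linarith [heq]
    exact mul_left_cancel₀ (inv_ne_zero hPNne) (by rw [h2])
  -- apply the equality-case lemma with C = 2m
  have hPm2 : (P - 1)⁻¹ * (2*(m:ℝ)) = 1 := by
    rw [hPm]
    have : 2*(m:ℝ) ≠ 0 := by positivity
    field_simp
    ring
  have hmax := tsum_eq_max hP (fun t => (J' (t+N) : ℝ) - (J (t+N) : ℝ)) (2*(m:ℝ))
    (by
      intro t
      have h1 : |(J' (t+N) : ℝ)| ≤ (m:ℝ) := by exact_mod_cast hJ' (t+N)
      have h2 : |(J (t+N) : ℝ)| ≤ (m:ℝ) := by exact_mod_cast hJ (t+N)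
      calc |(J' (t+N) : ℝ) - (J (t+N) : ℝ)| ≤ |(J' (t+N) : ℝ)| + |(J (t+N) : ℝ)| :=
            abs_sub _ _
        _ ≤ 2*(m:ℝ) := by linarith)
    (by rw [htails]; linarith [hPm2])
  intro t
  have := hmax t
  have hZ : (J' (t+N) : ℝ) - (J (t+N) : ℝ) = ((2*(m:ℤ) : ℤ) : ℝ) := by push_cast; push_cast at this; linarith
  have hZ2 : J' (t+N) - J (t+N) = 2*(m:ℤ) := by exact_mod_cast hZ
  have h1 := abs_le.1 (hJ (t+N))
  have h2 := abs_le.1 (hJ' (t+N))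
  omega

lemma bshift_neg (ε : ℝ) (j : ℤ) : bshift ε (-j) = bshift ε j := by
  unfold bshift; simp only [odd_neg]

lemma bshift_sub_abs (ε : ℝ) (l : ℤ) : |bshift ε l - bshift ε (l+1)| = |ε| := by
  unfold bshift
  rcases Int.even_or_odd l with he | ho
  · rw [if_neg (by rw [Int.not_odd_iff_even]; exact he), if_pos (Even.add_one he)]
    rw [zero_sub, abs_neg]
  · rw [if_pos ho, if_neg (by rw [Int.not_odd_iff_even, Int.even_add_one, Int.not_even_iff_odd]; exact ho)]
    rw [sub_zero]

set_option maxHeartbeats 2000000 in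
lemma core (m : ℕ) (hm : 1 ≤ m) (p : ℤ) (hp : p = 2 * (m : ℤ) + 1) (ε : ℝ)
    (w : List ℤ) (hw : ∀ j ∈ w, |j| ≤ (m : ℤ)) (k l : ℤ) (hk : |k| ≤ (m : ℤ))
    (hl : |l| ≤ (m : ℤ)) (hkl : k = l + 1) :
    (∃ z : ℝ × ℝ, Gset p m ε (w ++ [k]) ∩ Gset p m ε (w ++ [l]) = {z})
      ↔ |ε| = (p : ℝ) ^ (w.length + 1) := by
  obtain ⟨P, hPdef⟩ : ∃ x : ℝ, x = (p:ℝ) := ⟨_, rfl⟩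
  have hPm : P = 2*(m:ℝ)+1 := by rw [hPdef, hp]; push_cast; ring
  have hm1 : (1:ℝ) ≤ (m:ℝ) := by exact_mod_cast hm
  have hP : 1 < P := by rw [hPm]; nlinarith
  have hP0 : (0:ℝ) < P := lt_trans one_pos hP
  have hPN : (0:ℝ) < P ^ (w.length+1) := by positivity
  have hPinv : (P - 1)⁻¹ * (2*(m:ℝ)) = 1 := by
    rw [hPm]
    have h2m : 2*(m:ℝ) ≠ 0 := by positivity
    have he : (2*(m:ℝ)+1) - 1 = 2*(m:ℝ) := by ring
    rw [he]
    field_simp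
  have hhalf : (m:ℝ) * (P-1)⁻¹ = 1/2 := by nlinarith [hPinv]
  obtain ⟨τ, hτ⟩ : ∃ x : ℝ, x = (P ^ (w.length+1))⁻¹ * (P-1)⁻¹ := ⟨_, rfl⟩
  obtain ⟨A, hA⟩ : ∃ x : ℝ,
    x = ∑ t ∈ Finset.range w.length, (P ^ (t+1))⁻¹ * ((w.getD t 0 : ℤ) : ℝ) := ⟨_, rfl⟩
  obtain ⟨B, hB⟩ : ∃ x : ℝ,
    x = ∑ t ∈ Finset.range w.length, (P ^ (t+1))⁻¹ * bshift ε (w.getD t 0) := ⟨_, rfl⟩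
  obtain ⟨d, hd⟩ : ∃ x : ℝ, x = (P ^ (w.length+1))⁻¹ * (bshift ε l - bshift ε k) := ⟨_, rfl⟩
  obtain ⟨X0, hX0⟩ : ∃ x : ℝ,
    x = B + (P ^ (w.length+1))⁻¹ * bshift ε k + bshift ε (m:ℤ) * τ := ⟨_, rfl⟩
  obtain ⟨y0, hy0⟩ : ∃ x : ℝ,
    x = A + (P ^ (w.length+1))⁻¹ * ((k:ℤ) : ℝ) - (m:ℝ) * τ := ⟨_, rfl⟩
  have hdabs : |d| = (P ^ (w.length+1))⁻¹ * |ε| := by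
    rw [hd, abs_mul, abs_of_pos (by positivity : (0:ℝ) < (P ^ (w.length+1))⁻¹)]
    rw [hkl, bshift_sub_abs]
  have h2mτ : 2*(m:ℝ)*τ = (P ^ (w.length+1))⁻¹ := by
    calc 2*(m:ℝ)*τ = (P ^ (w.length+1))⁻¹ * ((P-1)⁻¹ * (2*(m:ℝ))) := by rw [hτ]; ring
      _ = (P ^ (w.length+1))⁻¹ := by rw [hPinv, mul_one]
  have hwk : ∀ j ∈ w ++ [k], |j| ≤ (m:ℤ) := by
    intro j hj
    rcases List.mem_append.1 hj with h | h
    · exact hw j h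
    · rw [List.mem_singleton.1 h]; exact hk
  have hwl : ∀ j ∈ w ++ [l], |j| ≤ (m:ℤ) := by
    intro j hj
    rcases List.mem_append.1 hj with h | h
    · exact hw j h
    · rw [List.mem_singleton.1 h]; exact hl
  have hlenk : (w ++ [k]).length = w.length + 1 := by simp
  have hlenl : (w ++ [l]).length = w.length + 1 := by simp
  have hkR : ((k:ℤ):ℝ) = ((l:ℤ):ℝ) + 1 := by exact_mod_cast hkl
  -- characterization of the intersection
  have hchar : ∀ z : ℝ × ℝ,
      (z ∈ Digits p m ε (w ++ [k]) ∧ z ∈ Digits p m ε (w ++ [l]))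
        ↔ (∃ u : ℝ, |u| ≤ 1/2 ∧ |u - d| ≤ 1/2 ∧ z = (X0 + u, y0)) := by
    intro z
    constructor
    · rintro ⟨⟨I, J, hI, hJ, hpre, hx1, hy1⟩, ⟨I', J', hI', hJ', hpre', hx1', hy1'⟩⟩
      rw [hlenk] at hpre
      rw [hlenl] at hpre'
      rw [← hPdef] at hx1 hy1 hx1' hy1'
      have htail := forced_tail m hm hPm w k l hkl J J' hJ hJ' hpre hpre'
        (by rw [← hy1, ← hy1'])
      obtain ⟨U, hU⟩ : ∃ x : ℝ, x = ∑' t : ℕ, (P ^ (t+1))⁻¹ * ((I t : ℤ) : ℝ) := ⟨_, rfl⟩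
      obtain ⟨U', hU'⟩ : ∃ x : ℝ, x = ∑' t : ℕ, (P ^ (t+1))⁻¹ * ((I' t : ℤ) : ℝ) := ⟨_, rfl⟩
      have hUbd : |U| ≤ 1/2 := by
        have h1 := tsum_abs_le hP (fun t => ((I t : ℤ) : ℝ)) (m:ℝ)
          (fun t => by show |((I t : ℤ) : ℝ)| ≤ (m:ℝ); exact_mod_cast hI t)
        rw [← hU] at h1
        linarith [h1, hhalf]
      have hU'bd : |U'| ≤ 1/2 := by
        have h1 := tsum_abs_le hP (fun t => ((I' t : ℤ) : ℝ)) (m:ℝ)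
          (fun t => by show |((I' t : ℤ) : ℝ)| ≤ (m:ℝ); exact_mod_cast hI' t)
        rw [← hU'] at h1
        linarith [h1, hhalf]
      have hsI : Summable (fun t : ℕ => (P ^ (t+1))⁻¹ * ((I t : ℤ) : ℝ)) :=
        summable_bdd hP _ (m:ℝ)
          (fun t => by show |((I t : ℤ) : ℝ)| ≤ (m:ℝ); exact_mod_cast hI t)
      have hsI' : Summable (fun t : ℕ => (P ^ (t+1))⁻¹ * ((I' t : ℤ) : ℝ)) :=
        summable_bdd hP _ (m:ℝ)
          (fun t => by show |((I' t : ℤ) : ℝ)| ≤ (m:ℝ); exact_mod_cast hI' t)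
      have hsb : Summable (fun t : ℕ => (P ^ (t+1))⁻¹ * bshift ε (J t)) :=
        summable_bdd hP _ |ε| (fun t => bshift_abs_le ε (J t))
      have hsb' : Summable (fun t : ℕ => (P ^ (t+1))⁻¹ * bshift ε (J' t)) :=
        summable_bdd hP _ |ε| (fun t => bshift_abs_le ε (J' t))
      have hxdec : z.1 = U + (B + (P ^ (w.length+1))⁻¹ * bshift ε k + bshift ε (m:ℤ) * τ) := by
        rw [hx1]
        have hadd : ∑' t : ℕ, (P ^ (t+1))⁻¹ * (((I t : ℤ) : ℝ) + bshift ε (J t))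
            = U + ∑' t : ℕ, (P ^ (t+1))⁻¹ * bshift ε (J t) := by
          rw [hU, ← Summable.tsum_add hsI hsb]
          congr 1; funext t; ring
        rw [hadd]
        congr 1
        rw [tsum_of_prefix_tail hP (bshift ε) |ε| J w k (-(m:ℤ))
          (fun t => bshift_abs_le ε (J t)) hpre (fun t => (htail t).1), bshift_neg]
        rw [← hB, ← hτ]
      have hxdec' : z.1 = U' + (B + (P ^ (w.length+1))⁻¹ * bshift ε l + bshift ε (m:ℤ) * τ) := by
        rw [hx1']
        have hadd : ∑' t : ℕ, (P ^ (t+1))⁻¹ * (((I' t : ℤ) : ℝ) + bshift ε (J' t))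
            = U' + ∑' t : ℕ, (P ^ (t+1))⁻¹ * bshift ε (J' t) := by
          rw [hU', ← Summable.tsum_add hsI' hsb']
          congr 1; funext t; ring
        rw [hadd]
        congr 1
        rw [tsum_of_prefix_tail hP (bshift ε) |ε| J' w l ((m:ℤ))
          (fun t => bshift_abs_le ε (J' t)) hpre' (fun t => (htail t).2)]
        rw [← hB, ← hτ]
      have hydec : z.2 = y0 := by
        rw [hy1]
        rw [tsum_of_prefix_tail hP (Int.cast : ℤ → ℝ) (m:ℝ) J w k (-(m:ℤ))
          (fun t => by show |((J t : ℤ) : ℝ)| ≤ (m:ℝ); exact_mod_cast hJ t)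
          hpre (fun t => (htail t).1)]
        rw [hy0, hA, hτ]
        push_cast
        ring
      refine ⟨U, hUbd, ?_, ?_⟩
      · have hUU' : U - d = U' := by
          rw [hd]
          have heq := hxdec.symm.trans hxdec'
          linarith [heq]
        rw [hUU']
        exact hU'bd
      · have hz1 : z.1 = X0 + U := by rw [hxdec, hX0]; ring
        exact Prod.ext hz1 hydec
    · rintro ⟨u, hu, hud, rfl⟩
      have hPrP : Pr m = P := by unfold Pr; rw [hPm]
      obtain ⟨a, ha, hsuma⟩ := exists_digits m hm u hu
      obtain ⟨a', ha', hsuma'⟩ := exists_digits m hm (u - d) hud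
      simp only [hPrP] at hsuma hsuma'
      obtain ⟨J, hJdef⟩ : ∃ J : ℕ → ℤ,
        J = fun t => if t < w.length+1 then (w ++ [k]).getD t 0 else -(m:ℤ) := ⟨_, rfl⟩
      obtain ⟨J', hJ'def⟩ : ∃ J' : ℕ → ℤ,
        J' = fun t => if t < w.length+1 then (w ++ [l]).getD t 0 else (m:ℤ) := ⟨_, rfl⟩
      have hJt : ∀ t, J t = if t < w.length+1 then (w ++ [k]).getD t 0 else -(m:ℤ) := by
        intro t; rw [hJdef]
      have hJ't : ∀ t, J' t = if t < w.length+1 then (w ++ [l]).getD t 0 else (m:ℤ) := by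
        intro t; rw [hJ'def]
      have hJbd : ∀ t, |J t| ≤ (m:ℤ) := by
        intro t
        rw [hJt t]
        by_cases ht : t < w.length+1
        · rw [if_pos ht]; exact getD_abs_le m _ hwk t
        · rw [if_neg ht, abs_neg, abs_of_nonneg (by positivity)]
      have hJ'bd : ∀ t, |J' t| ≤ (m:ℤ) := by
        intro t
        rw [hJ't t]
        by_cases ht : t < w.length+1
        · rw [if_pos ht]; exact getD_abs_le m _ hwl t
        · rw [if_neg ht, abs_of_nonneg (by positivity)]
      have hpreJ : ∀ t, t < w.length+1 → J t = (w ++ [k]).getD t 0 := by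
        intro t ht; rw [hJt t]; exact if_pos ht
      have hpreJ' : ∀ t, t < w.length+1 → J' t = (w ++ [l]).getD t 0 := by
        intro t ht; rw [hJ't t]; exact if_pos ht
      have htailJ : ∀ t, J (t + (w.length+1)) = -(m:ℤ) := by
        intro t; rw [hJt _]; exact if_neg (by omega)
      have htailJ' : ∀ t, J' (t + (w.length+1)) = (m:ℤ) := by
        intro t; rw [hJ't _]; exact if_neg (by omega)
      have hsa : Summable (fun t : ℕ => (P ^ (t+1))⁻¹ * ((a t : ℤ) : ℝ)) :=
        summable_bdd hP _ (m:ℝ)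
          (fun t => by show |((a t : ℤ) : ℝ)| ≤ (m:ℝ); exact_mod_cast ha t)
      have hsa' : Summable (fun t : ℕ => (P ^ (t+1))⁻¹ * ((a' t : ℤ) : ℝ)) :=
        summable_bdd hP _ (m:ℝ)
          (fun t => by show |((a' t : ℤ) : ℝ)| ≤ (m:ℝ); exact_mod_cast ha' t)
      have hsbJ : Summable (fun t : ℕ => (P ^ (t+1))⁻¹ * bshift ε (J t)) :=
        summable_bdd hP _ |ε| (fun t => bshift_abs_le ε (J t))
      have hsbJ' : Summable (fun t : ℕ => (P ^ (t+1))⁻¹ * bshift ε (J' t)) :=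
        summable_bdd hP _ |ε| (fun t => bshift_abs_le ε (J' t))
      constructor
      · refine ⟨a, J, ha, hJbd, by rw [hlenk]; exact hpreJ, ?_, ?_⟩
        · show X0 + u = ∑' t : ℕ, ((p:ℝ) ^ (t+1))⁻¹ * (((a t : ℤ) : ℝ) + bshift ε (J t))
          rw [← hPdef]
          have hadd : ∑' t : ℕ, (P ^ (t+1))⁻¹ * (((a t : ℤ) : ℝ) + bshift ε (J t))
              = (∑' t : ℕ, (P ^ (t+1))⁻¹ * ((a t : ℤ) : ℝ))
                + ∑' t : ℕ, (P ^ (t+1))⁻¹ * bshift ε (J t) := by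
            rw [← Summable.tsum_add hsa hsbJ]
            congr 1; funext t; ring
          rw [hadd, hsuma]
          rw [tsum_of_prefix_tail hP (bshift ε) |ε| J w k (-(m:ℤ))
            (fun t => bshift_abs_le ε (J t)) hpreJ htailJ, bshift_neg]
          rw [← hB, ← hτ, hX0]
          ring
        · show y0 = ∑' t : ℕ, ((p:ℝ) ^ (t+1))⁻¹ * ((J t : ℤ) : ℝ)
          rw [← hPdef]
          rw [tsum_of_prefix_tail hP (Int.cast : ℤ → ℝ) (m:ℝ) J w k (-(m:ℤ))
            (fun t => by show |((J t : ℤ) : ℝ)| ≤ (m:ℝ); exact_mod_cast hJbd t)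
            hpreJ htailJ]
          rw [hy0, hA, hτ]
          push_cast
          ring
      · refine ⟨a', J', ha', hJ'bd, by rw [hlenl]; exact hpreJ', ?_, ?_⟩
        · show X0 + u = ∑' t : ℕ, ((p:ℝ) ^ (t+1))⁻¹ * (((a' t : ℤ) : ℝ) + bshift ε (J' t))
          rw [← hPdef]
          have hadd : ∑' t : ℕ, (P ^ (t+1))⁻¹ * (((a' t : ℤ) : ℝ) + bshift ε (J' t))
              = (∑' t : ℕ, (P ^ (t+1))⁻¹ * ((a' t : ℤ) : ℝ))
                + ∑' t : ℕ, (P ^ (t+1))⁻¹ * bshift ε (J' t) := by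
            rw [← Summable.tsum_add hsa' hsbJ']
            congr 1; funext t; ring
          rw [hadd, hsuma']
          rw [tsum_of_prefix_tail hP (bshift ε) |ε| J' w l ((m:ℤ))
            (fun t => bshift_abs_le ε (J' t)) hpreJ' htailJ']
          rw [← hB, ← hτ, hX0, hd]
          ring
        · show y0 = ∑' t : ℕ, ((p:ℝ) ^ (t+1))⁻¹ * ((J' t : ℤ) : ℝ)
          rw [← hPdef]
          rw [tsum_of_prefix_tail hP (Int.cast : ℤ → ℝ) (m:ℝ) J' w l ((m:ℤ))
            (fun t => by show |((J' t : ℤ) : ℝ)| ≤ (m:ℝ); exact_mod_cast hJ'bd t)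
            hpreJ' htailJ']
          rw [hy0, hA, hτ, hkR]
          push_cast
          have h2m' : 2*(m:ℝ)*((P ^ (w.length+1))⁻¹ * (P-1)⁻¹) = (P ^ (w.length+1))⁻¹ := by
            rw [← hτ]; exact h2mτ
          linarith [h2m']
  -- rewrite the intersection
  have hS : Gset p m ε (w ++ [k]) ∩ Gset p m ε (w ++ [l])
      = {z : ℝ × ℝ | ∃ u : ℝ, |u| ≤ 1/2 ∧ |u - d| ≤ 1/2 ∧ z = (X0 + u, y0)} := by
    rw [gset_eq p m hm hp ε (w ++ [k]) hwk, gset_eq p m hm hp ε (w ++ [l]) hwl]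
    ext z
    exact hchar z
  clear hchar
  rw [hS, ← hPdef]
  clear hS
  have habs0 : 0 ≤ |d| := abs_nonneg d
  constructor
  · rintro ⟨z, hz⟩
    rcases lt_trichotomy |d| 1 with hlt | heq1 | hgt
    · exfalso
      have hmem : ∀ u : ℝ, |u| ≤ 1/2 → |u - d| ≤ 1/2 →
          (X0 + u, y0) ∈ ({z} : Set (ℝ × ℝ)) := by
        intro u h1 h2
        rw [← hz]
        exact ⟨u, h1, h2, rfl⟩
      have hb₁ : |(d + 1 - |d|)/2| ≤ 1/2 := by
        rcases abs_cases d with ⟨h1, h2⟩ | ⟨h1, h2⟩ <;> rw [abs_le] <;>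
          constructor <;> linarith
      have hb₂ : |(d + 1 - |d|)/2 - d| ≤ 1/2 := by
        rcases abs_cases d with ⟨h1, h2⟩ | ⟨h1, h2⟩ <;> rw [abs_le] <;>
          constructor <;> linarith
      have hb₃ : |(d - 1 + |d|)/2| ≤ 1/2 := by
        rcases abs_cases d with ⟨h1, h2⟩ | ⟨h1, h2⟩ <;> rw [abs_le] <;>
          constructor <;> linarith
      have hb₄ : |(d - 1 + |d|)/2 - d| ≤ 1/2 := by
        rcases abs_cases d with ⟨h1, h2⟩ | ⟨h1, h2⟩ <;> rw [abs_le] <;>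
          constructor <;> linarith
      have hm₁ := Set.mem_singleton_iff.1 (hmem _ hb₁ hb₂)
      have hm₂ := Set.mem_singleton_iff.1 (hmem _ hb₃ hb₄)
      have h12 := hm₁.trans hm₂.symm
      have hfst : X0 + (d + 1 - |d|)/2 = X0 + (d - 1 + |d|)/2 := congrArg Prod.fst h12
      have : |d| = 1 := by linarith
      linarith
    · rw [hdabs] at heq1
      have hPNne : (P ^ (w.length+1)) ≠ 0 := ne_of_gt hPN
      field_simp at heq1
      linarith
    · exfalso
      have hzS : z ∈ {z : ℝ × ℝ | ∃ u : ℝ, |u| ≤ 1/2 ∧ |u - d| ≤ 1/2 ∧ z = (X0 + u, y0)} := by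
        rw [hz]; exact rfl
      obtain ⟨u, hu, hud, _⟩ := hzS
      have h1 : |d| ≤ |u| + |u - d| := by
        have h2 : |u - (u - d)| ≤ |u| + |u - d| := abs_sub _ _
        simpa using h2
      linarith
  · intro hε
    have hd1 : |d| = 1 := by
      rw [hdabs, hε]
      field_simp
    refine ⟨(X0 + d/2, y0), ?_⟩
    ext z
    simp only [Set.mem_setOf_eq, Set.mem_singleton_iff]
    constructor
    · rintro ⟨u, hu, hud, rfl⟩
      have hcase : d = 1 ∨ d = -1 := by
        rcases abs_cases d with ⟨h1, _⟩ | ⟨h1, _⟩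
        · left; linarith [hd1, h1]
        · right; linarith [hd1, h1]
      have hu2 : u = d/2 := by
        rw [abs_le] at hu hud
        rcases hcase with h | h <;> rw [h] at hud ⊢ <;>
          linarith [hu.1, hu.2, hud.1, hud.2]
      rw [hu2]
    · rintro rfl
      refine ⟨d/2, ?_, ?_, rfl⟩
      · rw [abs_div, abs_of_pos (by norm_num : (0:ℝ) < 2), hd1]
      · have he : d/2 - d = -(d/2) := by ring
        rw [he, abs_neg, abs_div, abs_of_pos (by norm_num : (0:ℝ) < 2), hd1]

end S6

/-- if `|k - ℓ| = 1` then `G_{j₁⋯j_n k} ∩ G_{j₁⋯j_n ℓ}` is a single point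
if and only if `|ε| = p^(n+1)`. -/
theorem stmt6 (m : ℕ) (hm : 1 ≤ m) (p : ℤ) (hp : p = 2 * (m : ℤ) + 1) (ε : ℝ)
    (n : ℕ) (hn : 1 ≤ n) (w : List ℤ) (hwlen : w.length = n)
    (hw : ∀ j ∈ w, |j| ≤ (m : ℤ)) (k l : ℤ) (hk : |k| ≤ (m : ℤ)) (hl : |l| ≤ (m : ℤ))
    (hkl : |k - l| = 1) :
    (∃ z : ℝ × ℝ, Gset p m ε (w ++ [k]) ∩ Gset p m ε (w ++ [l]) = {z})
      ↔ |ε| = (p : ℝ) ^ (n + 1) := by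
  subst hwlen
  rcases abs_eq (by norm_num : (0:ℤ) ≤ 1) |>.1 hkl with h | h
  · exact S6.core m hm p hp ε w hw k l hk hl (by omega)
  · have h2 := S6.core m hm p hp ε w hw l k hl hk (by omega)
    rw [Set.inter_comm] at h2
    exact h2
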